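/- arXiv:2008.01900 — 5 statements merged into one kernel-verified Lean document; each statement's English description precedes it below -/
import Mathlib

section
/- If x : ℝ → ℝ is three times continuously differentiable with bounded third derivative, then the 4-instant forward difference formula (2x(t+τ) - 3x(t) + 2x(t-τ) - x(t-2τ))/(2τ) approximates ẋ(t) with truncation error O(τ²). -/
lemma taylor2_aux (x : ℝ → ℝ) (hx : ContDiff ℝ 3 x) (t s M : ℝ)
    (hM : ∀ u ∈ Set.uIcc t s, |iteratedDeriv 3 x u| ≤ M) :
    |x s - (x t + (s - t) * deriv x t + (s - t) ^ 2 / 2 * iteratedDeriv 2 x t)| ≤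
      M * |s - t| ^ 3 / 2 := by
  set g : ℝ → ℝ := fun u => x u + (s - u) * deriv x u + (s - u) ^ 2 / 2 * iteratedDeriv 2 x u
    with hgdef
  have h1 : Differentiable ℝ x := hx.differentiable (by norm_num)
  have h2 : Differentiable ℝ (deriv x) := by
    have := hx.differentiable_iteratedDeriv 1 (by norm_num)
    simpa [iteratedDeriv_one] using this
  have h3 : Differentiable ℝ (iteratedDeriv 2 x) :=
    hx.differentiable_iteratedDeriv 2 (by norm_num)
  have hd2 : ∀ u, HasDerivAt (deriv x) (iteratedDeriv 2 x u) u := by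
    intro u
    have : iteratedDeriv 2 x = deriv (deriv x) := by
      rw [iteratedDeriv_succ, iteratedDeriv_one]
    rw [this]
    exact (h2 u).hasDerivAt
  have hd3 : ∀ u, HasDerivAt (iteratedDeriv 2 x) (iteratedDeriv 3 x u) u := by
    intro u
    have : iteratedDeriv 3 x = deriv (iteratedDeriv 2 x) := iteratedDeriv_succ
    rw [this]
    exact (h3 u).hasDerivAt
  have hg : ∀ u, HasDerivAt g ((s - u) ^ 2 / 2 * iteratedDeriv 3 x u) u := by
    intro u
    have hA : HasDerivAt x (deriv x u) u := (h1 u).hasDerivAt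
    have hB : HasDerivAt (fun u => (s - u) * deriv x u)
        ((-1) * deriv x u + (s - u) * iteratedDeriv 2 x u) u :=
      ((hasDerivAt_id u).const_sub s).mul (hd2 u)
    have hC : HasDerivAt (fun u => (s - u) ^ 2 / 2 * iteratedDeriv 2 x u)
        ((2 * (s - u) ^ 1 * (-1) / 2) * iteratedDeriv 2 x u +
          (s - u) ^ 2 / 2 * iteratedDeriv 3 x u) u := by
      exact ((((hasDerivAt_id u).const_sub s).pow 2).div_const 2).mul (hd3 u)
    have := (hA.add hB).add hC
    exact this.congr_deriv (by ring)
  have key : ‖g s - g t‖ ≤ M * (s - t) ^ 2 / 2 * ‖s - t‖ := by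
    apply Convex.norm_image_sub_le_of_norm_hasDerivWithin_le
      (f' := fun u => (s - u) ^ 2 / 2 * iteratedDeriv 3 x u)
      (fun u hu => (hg u).hasDerivWithinAt) ?_ (convex_uIcc t s)
      Set.left_mem_uIcc Set.right_mem_uIcc
    intro u hu
    have h1 : |s - u| ≤ |s - t| := by
      rw [Set.uIcc_eq_union] at hu
      rcases hu with hu | hu <;> rw [abs_le] <;> cases' abs_le.mp (le_refl |s - t|) with _ _ <;>
        constructor <;> simp only [Set.mem_Icc] at hu <;> cases' hu with hl hr <;>
        [skip; skip; skip; skip] <;> nlinarith [abs_nonneg (s - t), le_abs_self (s - t),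
          neg_abs_le (s - t)]
    have hMnn : 0 ≤ M := le_trans (abs_nonneg _) (hM t Set.left_mem_uIcc)
    have h2 := hM u hu
    rw [Real.norm_eq_abs, abs_mul]
    have : |(s - u) ^ 2 / 2| = (s - u) ^ 2 / 2 := abs_of_nonneg (by positivity)
    rw [this]
    have hsq : (s - u) ^ 2 ≤ (s - t) ^ 2 := by
      have := sq_abs (s - u); have := sq_abs (s - t)
      nlinarith [abs_nonneg (s - u), abs_nonneg (s - t)]
    nlinarith [abs_nonneg (iteratedDeriv 3 x u)]
  have hgs : g s = x s := by simp [hgdef]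
  have hgt : g t = x t + (s - t) * deriv x t + (s - t) ^ 2 / 2 * iteratedDeriv 2 x t := rfl
  rw [hgs, hgt] at key
  rw [Real.norm_eq_abs, Real.norm_eq_abs] at key
  calc |x s - (x t + (s - t) * deriv x t + (s - t) ^ 2 / 2 * iteratedDeriv 2 x t)|
      ≤ M * (s - t) ^ 2 / 2 * |s - t| := key
    _ = M * |s - t| ^ 3 / 2 := by rw [← sq_abs (s - t)]; ring

theorem four_instant_forward_difference_truncation_error :
    ∃ C : ℝ, 0 < C ∧ ∀ (x : ℝ → ℝ) (t τ M : ℝ), ContDiff ℝ 3 x → 0 < τ →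
      (∀ s ∈ Set.Icc (t - 2 * τ) (t + τ), |iteratedDeriv 3 x s| ≤ M) →
      |(2 * x (t + τ) - 3 * x t + 2 * x (t - τ) - x (t - 2 * τ)) / (2 * τ) -
          deriv x t| ≤ C * M * τ ^ 2 := by
  refine ⟨3, by norm_num, fun x t τ M hx hτ hM => ?_⟩
  have hsub1 : Set.uIcc t (t + τ) ⊆ Set.Icc (t - 2 * τ) (t + τ) := by
    rw [Set.uIcc_of_le (by linarith)]
    exact Set.Icc_subset_Icc (by linarith) le_rfl
  have hsub2 : Set.uIcc t (t - τ) ⊆ Set.Icc (t - 2 * τ) (t + τ) := by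
    rw [Set.uIcc_of_ge (by linarith)]
    exact Set.Icc_subset_Icc (by linarith) (by linarith)
  have hsub3 : Set.uIcc t (t - 2 * τ) ⊆ Set.Icc (t - 2 * τ) (t + τ) := by
    rw [Set.uIcc_of_ge (by linarith)]
    exact Set.Icc_subset_Icc le_rfl (by linarith)
  have e1 := taylor2_aux x hx t (t + τ) M (fun u hu => hM u (hsub1 hu))
  have e2 := taylor2_aux x hx t (t - τ) M (fun u hu => hM u (hsub2 hu))
  have e3 := taylor2_aux x hx t (t - 2 * τ) M (fun u hu => hM u (hsub3 hu))
  have hτ' : |t + τ - t| = τ := by rw [abs_of_pos (by linarith : (0:ℝ) < t + τ - t)]; ring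
  have hτ'' : |t - τ - t| = τ := by
    rw [abs_of_neg (by linarith : t - τ - t < 0)]; ring
  have hτ''' : |t - 2 * τ - t| = 2 * τ := by
    rw [abs_of_neg (by linarith : t - 2 * τ - t < 0)]; ring
  rw [hτ'] at e1; rw [hτ''] at e2; rw [hτ'''] at e3
  set D1 := deriv x t
  set D2 := iteratedDeriv 2 x t
  set E1 := x (t + τ) - (x t + (t + τ - t) * D1 + (t + τ - t) ^ 2 / 2 * D2) with hE1
  set E2 := x (t - τ) - (x t + (t - τ - t) * D1 + (t - τ - t) ^ 2 / 2 * D2) with hE2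
  set E3 := x (t - 2 * τ) - (x t + (t - 2 * τ - t) * D1 + (t - 2 * τ - t) ^ 2 / 2 * D2) with hE3
  have hx1 : x (t + τ) = E1 + (x t + τ * D1 + τ ^ 2 / 2 * D2) := by rw [hE1]; ring_nf
  have hx2 : x (t - τ) = E2 + (x t - τ * D1 + τ ^ 2 / 2 * D2) := by rw [hE2]; ring_nf
  have hx3 : x (t - 2 * τ) = E3 + (x t - 2 * τ * D1 + 2 * τ ^ 2 * D2) := by rw [hE3]; ring_nf
  have hmain : (2 * x (t + τ) - 3 * x t + 2 * x (t - τ) - x (t - 2 * τ)) / (2 * τ) - D1 =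
      (2 * E1 + 2 * E2 - E3) / (2 * τ) := by
    rw [hx1, hx2, hx3]
    field_simp
    ring
  rw [hmain]
  rw [abs_div, abs_of_pos (by linarith : (0:ℝ) < 2 * τ)]
  rw [div_le_iff₀ (by linarith : (0:ℝ) < 2 * τ)]
  have habs : |2 * E1 + 2 * E2 - E3| ≤ 2 * |E1| + 2 * |E2| + |E3| := by
    calc |2 * E1 + 2 * E2 - E3| ≤ |2 * E1 + 2 * E2| + |E3| := abs_sub _ _
      _ ≤ |2 * E1| + |2 * E2| + |E3| := by gcongr; exact abs_add_le _ _
      _ = 2 * |E1| + 2 * |E2| + |E3| := by rw [abs_mul, abs_mul]; norm_num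
  calc |2 * E1 + 2 * E2 - E3| ≤ 2 * |E1| + 2 * |E2| + |E3| := habs
    _ ≤ 2 * (M * τ ^ 3 / 2) + 2 * (M * τ ^ 3 / 2) + M * (2 * τ) ^ 3 / 2 := by gcongr
    _ = 3 * M * τ ^ 2 * (2 * τ) := by ring
end

section
/- If x : ℝ → ℝ is three times continuously differentiable with bounded third derivative, then (6x(t+τ) - 3x(t) - 2x(t-τ) - x(t-2τ))/(10τ) approximates ẋ(t) with truncation error O(τ²). -/
open Set

lemma iterWithin_eq3 {x : ℝ → ℝ} (hx : ContDiff ℝ 3 x) {a b : ℝ} (hab : a < b)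
    {y : ℝ} (hy : y ∈ Set.Icc a b) {m : ℕ} (hm : m ≤ 3) :
    iteratedDerivWithin m x (Set.Icc a b) y = iteratedDeriv m x y := by
  have h := (contDiff_iff_ftaylorSeries.mp hx).hasFTaylorSeriesUpToOn (Set.Icc a b)
  have h2 := h.eq_iteratedFDerivWithin_of_uniqueDiffOn (m := m) (by exact_mod_cast hm)
    (uniqueDiffOn_Icc hab) hy
  rw [iteratedDerivWithin_eq_iteratedFDerivWithin, ← h2, iteratedDeriv_eq_iteratedFDeriv]
  rfl

lemma taylor2_right {x : ℝ → ℝ} (hx : ContDiff ℝ 3 x) {t h M : ℝ} (h0 : 0 < h)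
    (hM : ∀ u ∈ Set.Icc t (t + h), |iteratedDeriv 3 x u| ≤ M) :
    |x (t + h) - (x t + deriv x t * h + iteratedDeriv 2 x t * h ^ 2 / 2)| ≤ M * h ^ 3 / 2 := by
  have hab : t < t + h := by linarith
  have hmem : t + h ∈ Set.Icc t (t + h) := ⟨by linarith, le_refl _⟩
  have hf : ContDiffOn ℝ (2 + 1 : ℕ) x (Set.Icc t (t + h)) :=
    hx.contDiffOn.of_le (by norm_cast)
  have hC : ∀ y ∈ Set.Icc t (t + h),
      ‖iteratedDerivWithin (2 + 1) x (Set.Icc t (t + h)) y‖ ≤ M := by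
    intro y hy
    rw [iterWithin_eq3 hx hab hy (by norm_num), Real.norm_eq_abs]
    exact hM y hy
  have hb := taylor_mean_remainder_bound (n := 2) hab.le hf hmem hC
  rw [taylor_within_apply] at hb
  have e0 : iteratedDerivWithin 0 x (Set.Icc t (t + h)) t = x t :=
    by rw [iterWithin_eq3 hx hab ⟨le_refl _, hab.le⟩ (by norm_num)]; simp
  have e1 : iteratedDerivWithin 1 x (Set.Icc t (t + h)) t = deriv x t :=
    by rw [iterWithin_eq3 hx hab ⟨le_refl _, hab.le⟩ (by norm_num)]; simp [iteratedDeriv_one]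
  have e2 : iteratedDerivWithin 2 x (Set.Icc t (t + h)) t = iteratedDeriv 2 x t :=
    iterWithin_eq3 hx hab ⟨le_refl _, hab.le⟩ (by norm_num)
  simp only [Finset.sum_range_succ, Finset.sum_range_zero, e0, e1, e2, smul_eq_mul,
    Real.norm_eq_abs] at hb
  norm_num [Nat.factorial] at hb
  calc |x (t + h) - (x t + deriv x t * h + iteratedDeriv 2 x t * h ^ 2 / 2)|
      = |x (t + h) - (x t + (t + h - t) * deriv x t +
          (t + h - t) ^ 2 / 2 * iteratedDeriv 2 x t)| := by congr 1; ring
    _ ≤ M * (t + h - t) ^ 3 / 2 := by convert hb using 2 <;> ring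
    _ = M * h ^ 3 / 2 := by ring_nf

lemma iter_reflect (x : ℝ → ℝ) (t : ℝ) (m : ℕ) (u : ℝ) :
    iteratedDeriv m (fun v => x (2 * t - v)) u = (-1 : ℝ) ^ m • iteratedDeriv m x (2 * t - u) := by
  have h1 : (fun v => x (2 * t - v)) = fun v => (fun w => x (-w)) (v + -(2 * t)) := by
    funext v; congr 1; ring
  have h2 := congrFun (iteratedDeriv_comp_add_const m (fun w => x (-w)) (-(2 * t))) u
  rw [h1, h2, iteratedDeriv_comp_neg]
  congr 1; ring

lemma taylor2_left {x : ℝ → ℝ} (hx : ContDiff ℝ 3 x) {t h M : ℝ} (h0 : 0 < h)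
    (hM : ∀ u ∈ Set.Icc (t - h) t, |iteratedDeriv 3 x u| ≤ M) :
    |x (t - h) - (x t - deriv x t * h + iteratedDeriv 2 x t * h ^ 2 / 2)| ≤ M * h ^ 3 / 2 := by
  set y : ℝ → ℝ := fun v => x (2 * t - v) with hy
  have hyc : ContDiff ℝ 3 y := hx.comp (contDiff_const.sub contDiff_id)
  have hM' : ∀ u ∈ Set.Icc t (t + h), |iteratedDeriv 3 y u| ≤ M := by
    intro u hu
    rw [hy, iter_reflect x t 3 u]
    have : |((-1 : ℝ) ^ 3 • iteratedDeriv 3 x (2 * t - u))| = |iteratedDeriv 3 x (2 * t - u)| := by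
      rw [smul_eq_mul]; simp [abs_mul]
    rw [this]
    exact hM _ ⟨by simp at hu ⊢; linarith [hu.2], by simp at hu ⊢; linarith [hu.1]⟩
  have hb := taylor2_right hyc h0 hM'
  have ey0 : y (t + h) = x (t - h) := by rw [hy]; congr 1; ring
  have ey1 : y t = x t := by rw [hy]; congr 1; ring
  have ed1 : deriv y t = -deriv x t := by
    have := iter_reflect x t 1 t
    rw [← iteratedDeriv_one, hy, this]
    simp [iteratedDeriv_one]
    congr 1; ring
  have ed2 : iteratedDeriv 2 y t = iteratedDeriv 2 x t := by
    have := iter_reflect x t 2 t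
    rw [hy, this]
    norm_num
    congr 1; ring
  rw [ey0, ey1, ed1, ed2] at hb
  calc |x (t - h) - (x t - deriv x t * h + iteratedDeriv 2 x t * h ^ 2 / 2)|
      = |x (t - h) - (x t + -deriv x t * h + iteratedDeriv 2 x t * h ^ 2 / 2)| := by congr 1; ring
    _ ≤ M * h ^ 3 / 2 := hb

theorem second_four_instant_formula_truncation_error :
    ∃ C : ℝ, 0 < C ∧ ∀ (x : ℝ → ℝ) (t τ M : ℝ), ContDiff ℝ 3 x → 0 < τ →
      (∀ s ∈ Set.Icc (t - 2 * τ) (t + τ), |iteratedDeriv 3 x s| ≤ M) →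
      |(6 * x (t + τ) - 3 * x t - 2 * x (t - τ) - x (t - 2 * τ)) / (10 * τ) -
          deriv x t| ≤ C * M * τ ^ 2 := by
  refine ⟨1, one_pos, fun x t τ M hx hτ hM => ?_⟩
  set d1 := deriv x t
  set d2 := iteratedDeriv 2 x t
  have hsub1 : ∀ u ∈ Set.Icc t (t + τ), |iteratedDeriv 3 x u| ≤ M := fun u hu =>
    hM u ⟨by linarith [hu.1], hu.2⟩
  have hsub2 : ∀ u ∈ Set.Icc (t - τ) t, |iteratedDeriv 3 x u| ≤ M := fun u hu =>
    hM u ⟨by linarith [hu.1], by linarith [hu.2]⟩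
  have hsub3 : ∀ u ∈ Set.Icc (t - 2 * τ) t, |iteratedDeriv 3 x u| ≤ M := fun u hu =>
    hM u ⟨hu.1, by linarith [hu.2]⟩
  have h1 := taylor2_right hx hτ hsub1
  have h2 := taylor2_left hx hτ hsub2
  have h3' : ∀ u ∈ Set.Icc (t - 2 * τ) t, |iteratedDeriv 3 x u| ≤ M := hsub3
  have h3 : |x (t - 2 * τ) - (x t - d1 * (2 * τ) + d2 * (2 * τ) ^ 2 / 2)| ≤
      M * (2 * τ) ^ 3 / 2 := taylor2_left hx (by linarith) h3'
  set E1 := x (t + τ) - (x t + d1 * τ + d2 * τ ^ 2 / 2) with hE1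
  set E2 := x (t - τ) - (x t - d1 * τ + d2 * τ ^ 2 / 2) with hE2
  set E3 := x (t - 2 * τ) - (x t - d1 * (2 * τ) + d2 * (2 * τ) ^ 2 / 2) with hE3
  have hτ0 : (10 : ℝ) * τ ≠ 0 := by positivity
  have key : (6 * x (t + τ) - 3 * x t - 2 * x (t - τ) - x (t - 2 * τ)) / (10 * τ) - d1 =
      (6 * E1 - 2 * E2 - E3) / (10 * τ) := by
    rw [hE1, hE2, hE3]; field_simp; ring
  rw [key, abs_div, abs_of_pos (by linarith : (0:ℝ) < 10 * τ)]
  have hnum : |6 * E1 - 2 * E2 - E3| ≤ 8 * M * τ ^ 3 := by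
    have b1 : |6 * E1| ≤ 3 * M * τ ^ 3 := by rw [abs_mul]; simp; nlinarith [h1, abs_nonneg E1]
    have b2 : |2 * E2| ≤ M * τ ^ 3 := by rw [abs_mul]; simp; nlinarith [h2, abs_nonneg E2]
    have b3 : |E3| ≤ 4 * M * τ ^ 3 := by nlinarith [h3]
    calc |6 * E1 - 2 * E2 - E3| ≤ |6 * E1 - 2 * E2| + |E3| := abs_sub _ _
      _ ≤ |6 * E1| + |2 * E2| + |E3| := by linarith [abs_sub (6 * E1) (2 * E2)]
      _ ≤ 8 * M * τ ^ 3 := by linarith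
  calc |6 * E1 - 2 * E2 - E3| / (10 * τ) ≤ (8 * M * τ ^ 3) / (10 * τ) := by
        apply div_le_div_of_nonneg_right ?_ (by linarith)
        exact hnum
    _ ≤ 1 * M * τ ^ 2 := by
        rw [div_le_iff₀ (by linarith : (0:ℝ) < 10 * τ)]
        have hM0 : 0 ≤ M := le_trans (abs_nonneg _) (hM t ⟨by linarith, by linarith⟩)
        nlinarith [mul_nonneg hM0 (pow_pos hτ 3).le]
end

section
/- If x : ℝ → ℝ is four times continuously differentiable with bounded fourth derivative, then the 5-IFD formula (8x(t+τ) + x(t) - 6x(t-τ) - 5x(t-2τ) + 2x(t-3τ))/(18τ) approximates ẋ(t) with truncation error O(τ³). -/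
open Set Finset

lemma idw_eq {f : ℝ → ℝ} (hf : ContDiff ℝ 4 f) {s : Set ℝ} (hs : UniqueDiffOn ℝ s)
    {n : ℕ} (hn : n ≤ 4) : ∀ y ∈ s, iteratedDerivWithin n f s y = iteratedDeriv n f y := by
  induction n with
  | zero => intro y hy; simp
  | succ n IH =>
    intro y hy
    rw [iteratedDerivWithin_succ, iteratedDeriv_succ]
    have heq : Set.EqOn (iteratedDerivWithin n f s) (iteratedDeriv n f) s := IH (by omega)
    rw [derivWithin_congr heq (heq hy)]
    exact ((hf.differentiable_iteratedDeriv n (by exact_mod_cast by omega)) y).derivWithin (hs y hy)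

lemma taylor4 {f : ℝ → ℝ} (hf : ContDiff ℝ 4 f) (t h M : ℝ)
    (hM : ∀ s ∈ Set.Icc (min t (t + h)) (max t (t + h)), |iteratedDeriv 4 f s| ≤ M) :
    |f (t + h) - (f t + h * deriv f t + h ^ 2 / 2 * iteratedDeriv 2 f t
      + h ^ 3 / 6 * iteratedDeriv 3 f t)| ≤ M * h ^ 4 / 6 := by
  rcases lt_trichotomy h 0 with hh | rfl | hh
  · -- h < 0 : reflect
    set g : ℝ → ℝ := fun u => f (-u) with hgdef
    have hg : ContDiff ℝ 4 g := hf.comp contDiff_neg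
    have hab : -t ≤ -(t + h) := by linarith
    have hab' : -t < -(t + h) := by linarith
    have hud := uniqueDiffOn_Icc hab'
    have hC : ∀ y ∈ Icc (-t) (-(t + h)), ‖iteratedDerivWithin 4 g (Icc (-t) (-(t + h))) y‖ ≤ M := by
      intro y hy
      rw [idw_eq hg hud le_rfl y hy, Real.norm_eq_abs, hgdef,
        iteratedDeriv_comp_neg 4 f y]
      simp only [smul_eq_mul]
      have : ((-1 : ℝ)) ^ 4 = 1 := by norm_num
      rw [this, one_mul]
      refine hM (-y) ⟨?_, ?_⟩
      · rcases hy with ⟨h1, h2⟩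
        simp only [min_def]; split <;> linarith
      · rcases hy with ⟨h1, h2⟩
        simp only [max_def]; split <;> linarith
    have key := taylor_mean_remainder_bound hab hg.contDiffOn (right_mem_Icc.2 hab) hC
    rw [taylor_within_apply] at key
    have hmem : -t ∈ Icc (-t) (-(t + h)) := left_mem_Icc.2 hab
    have hrw : ∀ k : ℕ, k ≤ 4 → iteratedDerivWithin k g (Icc (-t) (-(t + h))) (-t)
        = (-1 : ℝ) ^ k * iteratedDeriv k f t := by
      intro k hk
      rw [idw_eq hg hud hk (-t) hmem, hgdef, iteratedDeriv_comp_neg k f (-t), neg_neg,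
        smul_eq_mul]
    rw [Finset.sum_range_succ, Finset.sum_range_succ, Finset.sum_range_succ,
      Finset.sum_range_succ, Finset.sum_range_zero] at key
    rw [hrw 0 (by norm_num), hrw 1 (by norm_num), hrw 2 (by norm_num), hrw 3 (by norm_num)] at key
    simp only [hgdef, neg_neg, smul_eq_mul, Real.norm_eq_abs] at key
    rw [iteratedDeriv_zero, iteratedDeriv_one] at key
    have e1 : (-(t + h) - -t) = -h := by ring
    rw [e1] at key
    calc |f (t + h) - (f t + h * deriv f t + h ^ 2 / 2 * iteratedDeriv 2 f t
          + h ^ 3 / 6 * iteratedDeriv 3 f t)| = |f (t + h) - (0 + ((Nat.factorial 0 : ℝ))⁻¹ * (-h) ^ 0 * ((-1:ℝ)^0 * f t)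
            + ((Nat.factorial 1 : ℝ))⁻¹ * (-h) ^ 1 * ((-1:ℝ)^1 * deriv f t)
            + ((Nat.factorial 2 : ℝ))⁻¹ * (-h) ^ 2 * ((-1:ℝ)^2 * iteratedDeriv 2 f t)
            + ((Nat.factorial 3 : ℝ))⁻¹ * (-h) ^ 3 * ((-1:ℝ)^3 * iteratedDeriv 3 f t))| := by
          norm_num [Nat.factorial]; ring_nf
      _ ≤ M * (-h) ^ (3+1) / (Nat.factorial 3 : ℝ) := key
      _ = M * h ^ 4 / 6 := by rw [show ((Nat.factorial 3 : ℝ)) = 6 by norm_num [Nat.factorial]]; ring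
  · rw [add_zero]; norm_num
  · -- h > 0
    have hab : t ≤ t + h := by linarith
    have hab' : t < t + h := by linarith
    have hud := uniqueDiffOn_Icc hab'
    have hC : ∀ y ∈ Icc t (t + h), ‖iteratedDerivWithin 4 f (Icc t (t + h)) y‖ ≤ M := by
      intro y hy
      rw [idw_eq hf hud le_rfl y hy, Real.norm_eq_abs]
      refine hM y ⟨?_, ?_⟩
      · rcases hy with ⟨h1, h2⟩
        simp only [min_def]; split <;> linarith
      · rcases hy with ⟨h1, h2⟩
        simp only [max_def]; split <;> linarith
    have key := taylor_mean_remainder_bound hab hf.contDiffOn (right_mem_Icc.2 hab) hC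
    rw [taylor_within_apply] at key
    have hmem : t ∈ Icc t (t + h) := left_mem_Icc.2 hab
    rw [Finset.sum_range_succ, Finset.sum_range_succ, Finset.sum_range_succ,
      Finset.sum_range_succ, Finset.sum_range_zero] at key
    rw [idw_eq hf hud (by norm_num) t hmem, idw_eq hf hud (by norm_num) t hmem,
      idw_eq hf hud (by norm_num) t hmem, idw_eq hf hud (by norm_num) t hmem] at key
    simp only [smul_eq_mul, Real.norm_eq_abs] at key
    rw [iteratedDeriv_zero, iteratedDeriv_one] at key
    have e1 : (t + h - t) = h := by ring
    rw [e1] at key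
    calc |f (t + h) - (f t + h * deriv f t + h ^ 2 / 2 * iteratedDeriv 2 f t
          + h ^ 3 / 6 * iteratedDeriv 3 f t)| = |f (t + h) - (0 + ((Nat.factorial 0 : ℝ))⁻¹ * h ^ 0 * f t
            + ((Nat.factorial 1 : ℝ))⁻¹ * h ^ 1 * deriv f t
            + ((Nat.factorial 2 : ℝ))⁻¹ * h ^ 2 * iteratedDeriv 2 f t
            + ((Nat.factorial 3 : ℝ))⁻¹ * h ^ 3 * iteratedDeriv 3 f t)| := by
          norm_num [Nat.factorial]; ring_nf
      _ ≤ M * h ^ (3+1) / (Nat.factorial 3 : ℝ) := key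
      _ = M * h ^ 4 / 6 := by rw [show ((Nat.factorial 3 : ℝ)) = 6 by norm_num [Nat.factorial]]
theorem five_IFD_truncation_error :
    ∃ C : ℝ, 0 < C ∧ ∀ (x : ℝ → ℝ) (t τ M : ℝ), ContDiff ℝ 4 x → 0 < τ →
      (∀ s ∈ Set.Icc (t - 3 * τ) (t + τ), |iteratedDeriv 4 x s| ≤ M) →
      |(8 * x (t + τ) + x t - 6 * x (t - τ) - 5 * x (t - 2 * τ) +
          2 * x (t - 3 * τ)) / (18 * τ) - deriv x t| ≤ C * M * τ ^ 3 := by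
  refine ⟨3, by norm_num, fun x t τ M hx hτ hM => ?_⟩
  have sub : ∀ h : ℝ, -3 * τ ≤ h → h ≤ τ →
      ∀ s ∈ Set.Icc (min t (t + h)) (max t (t + h)), |iteratedDeriv 4 x s| ≤ M := by
    intro h hl hr s hs
    rcases hs with ⟨hs1, hs2⟩
    refine hM s ⟨?_, ?_⟩
    · have : t - 3 * τ ≤ min t (t + h) := le_min (by linarith) (by linarith)
      linarith
    · have : max t (t + h) ≤ t + τ := max_le (by linarith) (by linarith)
      linarith
  have h1 := taylor4 hx t τ M (sub τ (by linarith) le_rfl)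
  have h2 := taylor4 hx t (-τ) M (sub (-τ) (by linarith) (by linarith))
  have h3 := taylor4 hx t (-(2*τ)) M (sub (-(2*τ)) (by linarith) (by linarith))
  have h4 := taylor4 hx t (-(3*τ)) M (sub (-(3*τ)) (by linarith) (by linarith))
  rw [show t + -τ = t - τ by ring] at h2
  rw [show t + -(2*τ) = t - 2*τ by ring] at h3
  rw [show t + -(3*τ) = t - 3*τ by ring] at h4
  rw [show (-τ:ℝ)^4 = τ^4 by ring] at h2
  rw [show (-(2*τ):ℝ)^4 = 16*τ^4 by ring] at h3
  rw [show (-(3*τ):ℝ)^4 = 81*τ^4 by ring] at h4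
  set D2 := iteratedDeriv 2 x t
  set D3 := iteratedDeriv 3 x t
  set d := deriv x t
  set E1 := x (t + τ) - (x t + τ * d + τ^2/2 * D2 + τ^3/6 * D3) with hE1
  set E2 := x (t - τ) - (x t + (-τ) * d + (-τ)^2/2 * D2 + (-τ)^3/6 * D3) with hE2
  set E3 := x (t - 2*τ) - (x t + (-(2*τ)) * d + (-(2*τ))^2/2 * D2 + (-(2*τ))^3/6 * D3) with hE3
  set E4 := x (t - 3*τ) - (x t + (-(3*τ)) * d + (-(3*τ))^2/2 * D2 + (-(3*τ))^3/6 * D3) with hE4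
  have hτ' : (18:ℝ) * τ ≠ 0 := by positivity
  have key : (8 * x (t + τ) + x t - 6 * x (t - τ) - 5 * x (t - 2 * τ) +
      2 * x (t - 3 * τ)) / (18 * τ) - d = (8*E1 - 6*E2 - 5*E3 + 2*E4) / (18*τ) := by
    rw [hE1, hE2, hE3, hE4]
    field_simp
    ring
  rw [key, abs_div, abs_of_pos (by linarith : (0:ℝ) < 18*τ), div_le_iff₀ (by linarith)]
  clear_value D2 D3 d E1 E2 E3 E4
  have b1 := abs_le.mp h1
  have b2 := abs_le.mp h2
  have b3 := abs_le.mp h3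
  have b4 := abs_le.mp h4
  have hMτ : 0 ≤ M * τ^4/6 := le_trans (abs_nonneg E1) h1
  have hid : 3*M*τ^3*(18*τ) = 54*(M*τ^4) := by ring
  rw [abs_le, hid]
  constructor <;> linarith [b1.1, b1.2, b2.1, b2.2, b3.1, b3.2, b4.1, b4.2]
end

section
/- Every root of P₄(θ) = θ⁴ + (1/8)θ³ - (3/4)θ² - (5/8)θ + 1/4 over the complex numbers has absolute value at most 1, and θ = 1 is the only root on the unit circle and it is a simple root; hence the associated linear multistep method is 0-stable. -/
lemma cubic_root_lt_one (θ : ℂ) (h : θ ^ 3 + (9/8) * θ ^ 2 + (3/8) * θ - 1/4 = 0) :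
    ‖θ‖ < 1 := by
  have h1 := congrArg Complex.re h
  have h2 := congrArg Complex.im h
  simp only [Complex.add_re, Complex.sub_re, Complex.mul_re, Complex.mul_im,
    Complex.add_im, Complex.sub_im, pow_succ, pow_zero, Complex.one_re, Complex.one_im,
    Complex.zero_re, Complex.zero_im,
    Complex.div_re, Complex.div_im, Complex.normSq_apply] at h1 h2
  norm_num at h1 h2
  set x := θ.re with hx
  set y := θ.im with hy
  have hkey : x ^ 2 + y ^ 2 < 1 := by
    rcases eq_or_ne y 0 with h0 | h0
    · rw [h0] at h1
      norm_num at h1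
      have hlt : x < 1 := by nlinarith [sq_nonneg (x-1), sq_nonneg (x+1), sq_nonneg x]
      have hgt : -1 < x := by nlinarith [sq_nonneg (8*x+1), sq_nonneg (x+1)]
      rw [h0]
      nlinarith
    · have h3 : y * (3*x^2 - y^2 + (9/4)*x + 3/8) = 0 := by linear_combination h2
      have h4 : 3*x^2 - y^2 + (9/4)*x + 3/8 = 0 := by
        rcases mul_eq_zero.mp h3 with h' | h'
        · exact absurd h' h0
        · exact h'
      have hc : 512*x^3 + 576*x^2 + 210*x + 43 = 0 := by
        linear_combination (-64)*h1 + (192*x + 72)*h4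
      have hy2 : y^2 = 3*x^2 + (9/4)*x + 3/8 := by linarith
      have hypos : 0 < y^2 := (sq_nonneg y).lt_of_ne' (pow_ne_zero 2 h0)
      nlinarith [hc, hy2, hypos, sq_nonneg (32*x + 23), sq_nonneg (x+1), sq_nonneg x]
  have hsq := Complex.sq_norm θ
  have habs := norm_nonneg θ
  rw [Complex.normSq_apply] at hsq
  nlinarith [hsq, habs]

lemma quartic_factor (θ : ℂ) (h : θ ^ 4 + (1 / 8) * θ ^ 3 - (3 / 4) * θ ^ 2 - (5 / 8) * θ + 1 / 4 = 0) :
    θ = 1 ∨ θ ^ 3 + (9/8) * θ ^ 2 + (3/8) * θ - 1/4 = 0 := by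
  have hf : (θ - 1) * (θ ^ 3 + (9/8) * θ ^ 2 + (3/8) * θ - 1/4) = 0 := by
    linear_combination h
  rcases mul_eq_zero.mp hf with h' | h'
  · left; exact sub_eq_zero.mp h'
  · right; exact h'

theorem P4_root_condition_zero_stable :
    (∀ θ : ℂ, θ ^ 4 + (1 / 8) * θ ^ 3 - (3 / 4) * θ ^ 2 - (5 / 8) * θ + 1 / 4 = 0 →
      ‖θ‖ ≤ 1) ∧
    (∀ θ : ℂ, θ ^ 4 + (1 / 8) * θ ^ 3 - (3 / 4) * θ ^ 2 - (5 / 8) * θ + 1 / 4 = 0 →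
      ‖θ‖ = 1 → θ = 1) ∧
    (Polynomial.rootMultiplicity (1 : ℂ)
      (Polynomial.X ^ 4 + Polynomial.C (1 / 8) * Polynomial.X ^ 3 -
        Polynomial.C (3 / 4) * Polynomial.X ^ 2 - Polynomial.C (5 / 8) * Polynomial.X +
        Polynomial.C (1 / 4)) = 1) := by
  refine ⟨?_, ?_, ?_⟩
  · intro θ h
    rcases quartic_factor θ h with h' | h'
    · rw [h']; simp
    · exact (cubic_root_lt_one θ h').le
  · intro θ h habs
    rcases quartic_factor θ h with h' | h'
    · exact h'
    · exact absurd habs (cubic_root_lt_one θ h').ne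
  · set p : Polynomial ℂ := Polynomial.X ^ 4 + Polynomial.C (1 / 8) * Polynomial.X ^ 3 -
        Polynomial.C (3 / 4) * Polynomial.X ^ 2 - Polynomial.C (5 / 8) * Polynomial.X +
        Polynomial.C (1 / 4) with hp
    have hp0 : p ≠ 0 := by
      intro h
      have := congrArg (Polynomial.eval 0) h
      simp [hp] at this
    have hroot : p.IsRoot 1 := by
      simp [hp, Polynomial.IsRoot]
      norm_num
    have hder : ¬ (Polynomial.derivative p).IsRoot 1 := by
      simp [hp, Polynomial.IsRoot]
      norm_num
    have h1 : 0 < p.rootMultiplicity 1 := (Polynomial.rootMultiplicity_pos hp0).mpr hroot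
    have h2 : ¬ 1 < p.rootMultiplicity 1 := by
      rw [Polynomial.one_lt_rootMultiplicity_iff_isRoot hp0]
      tauto
    omega
end

section
/- Factoring out the root θ = 1, P₄(θ) = (θ - 1)·Q(θ) where Q(θ) = θ³ + (9/8)θ² + (3/8)θ - 1/4, and every complex root of Q has absolute value strictly less than 1. -/
theorem P4_factorization_and_Q_roots_in_open_disc :
    (∀ θ : ℂ, θ ^ 4 + (1 / 8) * θ ^ 3 - (3 / 4) * θ ^ 2 - (5 / 8) * θ + 1 / 4 =
      (θ - 1) * (θ ^ 3 + (9 / 8) * θ ^ 2 + (3 / 8) * θ - 1 / 4)) ∧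
    (∀ θ : ℂ, θ ^ 3 + (9 / 8) * θ ^ 2 + (3 / 8) * θ - 1 / 4 = 0 →
      ‖θ‖ < 1) := by
  constructor
  · intro θ; ring
  · intro θ h
    set x := θ.re
    set y := θ.im
    have h1 := congrArg Complex.re h
    have h2 := congrArg Complex.im h
    simp [pow_succ, Complex.add_re, Complex.add_im, Complex.sub_re, Complex.sub_im,
      Complex.mul_re, Complex.mul_im, Complex.div_re, Complex.div_im,
      Complex.one_re, Complex.one_im, Complex.normSq] at h1 h2
    have hre : x^3 - 3*x*y^2 + (9/8)*(x^2 - y^2) + (3/8)*x - 1/4 = 0 := by nlinarith [h1]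
    have him : 3*x^2*y - y^3 + (9/4)*x*y + (3/8)*y = 0 := by nlinarith [h2]
    have hkey : x^2 + y^2 < 1 := by
      rcases eq_or_ne y 0 with hy | hy
      · rw [hy] at hre ⊢
        have h1' : x^3 + (9/8)*x^2 + (3/8)*x - 1/4 = 0 := by nlinarith [hre]
        nlinarith [sq_nonneg (x-1), sq_nonneg (x+1), sq_nonneg x, sq_nonneg (x+1/2),
          sq_nonneg (x-1/2)]
      · have hy2 : y^2 = 3*x^2 + (9/4)*x + 3/8 := by
          have hmul : y * (y^2) = y * (3*x^2 + (9/4)*x + 3/8) := by nlinarith [him]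
          exact mul_left_cancel₀ hy hmul
        nlinarith [sq_nonneg y, sq_nonneg (x+1), sq_nonneg (10*x+7), sq_nonneg (4*x+3),
          sq_nonneg (x+7/10), sq_nonneg (x+3/4)]
    rw [Complex.norm_def, show (1:ℝ) = Real.sqrt 1 from Real.sqrt_one.symm]
    apply Real.sqrt_lt_sqrt (Complex.normSq_nonneg θ)
    rw [Complex.normSq_apply]
    clear h h1 h2 hre him
    nlinarith [hkey]
end
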